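/- Let p be an odd prime, n ≥ 0, ζ a primitive p^(n+1)-th root of unity in ℚ_p-bar, π = ζ - 1, and Δ = (Z/pZ)^×. Let χ: Δ → ℚ_p-bar^× be a character with χ ≠ ω^(-1), where ω is the Teichmüller character. Then the idempotent projection e_χ(1/π) = (1/(p-1)) Σ_{σ∈Δ} χ̄(σ) σ(1/π) lies in the ring of integers Z_p[ζ]. -/
import Mathlib
open Finset Polynomial

lemma padic_algebraMap_injective (p : ℕ) [Fact p.Prime] {K : Type*} [Field K] [CharZero K]
    [Algebra ℤ_[p] K] : Function.Injective (algebraMap ℤ_[p] K) := by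
  intro x y h
  by_contra hne
  have hx : x - y ≠ 0 := sub_ne_zero.mpr hne
  have hs := PadicInt.unitCoeff_spec hx
  have h0 : algebraMap ℤ_[p] K (x - y) = 0 := by rw [map_sub, h, sub_self]
  rw [hs, map_mul, map_pow] at h0
  rcases mul_eq_zero.mp h0 with h1 | h1
  · exact (((PadicInt.unitCoeff hx).isUnit.map (algebraMap ℤ_[p] K)).ne_zero) h1
  · have hne0 : (algebraMap ℤ_[p] K) ((p : ℕ) : ℤ_[p]) ≠ 0 := by
      rw [map_natCast]
      exact_mod_cast Nat.cast_ne_zero.mpr (Fact.out : p.Prime).ne_zero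
    exact pow_ne_zero _ hne0 h1

lemma chi_values' (p : ℕ) [Fact p.Prime] {K : Type*} [Field K] [CharZero K]
    [Algebra ℤ_[p] K]
    (ω : (ZMod p)ˣ →* ℤ_[p]ˣ)
    (hω : ∀ a : (ZMod p)ˣ, PadicInt.toZMod ((ω a : ℤ_[p]ˣ) : ℤ_[p]) = (a : ZMod p))
    (χ : (ZMod p)ˣ →* Kˣ) (a : (ZMod p)ˣ) :
    ∃ u : ℤ_[p]ˣ, (χ a : K) = algebraMap ℤ_[p] K u := by
  classical
  set A := algebraMap ℤ_[p] K with hA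
  set q := p - 1 with hq
  have hp : p.Prime := Fact.out
  have hq0 : 0 < q := by have := hp.two_le; omega
  have hcard : Fintype.card (ZMod p)ˣ = q := ZMod.card_units p
  -- every value of ω and χ is a q-th root of 1
  have hωpow : ∀ b : (ZMod p)ˣ, (A (ω b : ℤ_[p]ˣ)) ^ q = 1 := by
    intro b
    have : (ω b) ^ q = 1 := by rw [← map_pow, ← hcard, pow_card_eq_one, map_one]
    calc (A (ω b : ℤ_[p]ˣ)) ^ q = A (((ω b) ^ q : ℤ_[p]ˣ) : ℤ_[p]) := by
          rw [Units.val_pow_eq_pow_val, map_pow]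
      _ = 1 := by rw [this]; simp
  have hχpow : ((χ a : K)) ^ q = 1 := by
    have : (χ a) ^ q = 1 := by rw [← map_pow, ← hcard, pow_card_eq_one, map_one]
    calc ((χ a : K)) ^ q = ((χ a ^ q : Kˣ) : K) := by norm_cast
      _ = 1 := by rw [this]; simp
  -- the polynomial X^q - 1
  set P : K[X] := X ^ q - C 1 with hP
  have hPne : P ≠ 0 := X_pow_sub_C_ne_zero hq0 1
  have hPdeg : P.natDegree = q := natDegree_X_pow_sub_C
  have hroot : ∀ x : K, x ^ q = 1 → x ∈ P.roots.toFinset := by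
    intro x hx
    rw [Multiset.mem_toFinset, mem_roots hPne]
    simp [hP, IsRoot, hx]
  -- the images of ω are distinct roots
  have hinj : Function.Injective (fun b : (ZMod p)ˣ => A ((ω b : ℤ_[p]ˣ) : ℤ_[p])) := by
    intro b b' h
    have h2 : ((ω b : ℤ_[p]ˣ) : ℤ_[p]) = ((ω b' : ℤ_[p]ˣ) : ℤ_[p]) :=
      padic_algebraMap_injective p h
    have h3 : (b : ZMod p) = (b' : ZMod p) := by rw [← hω b, ← hω b', h2]
    exact Units.ext h3
  set S : Finset K := Finset.image (fun b : (ZMod p)ˣ => A ((ω b : ℤ_[p]ˣ) : ℤ_[p])) univ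
    with hS
  have hScard : S.card = q := by
    rw [hS, Finset.card_image_of_injective _ hinj, Finset.card_univ, hcard]
  have hSsub : S ⊆ P.roots.toFinset := by
    intro x hx
    rw [hS, Finset.mem_image] at hx
    obtain ⟨b, _, rfl⟩ := hx
    exact hroot _ (hωpow b)
  have hSeq : S = P.roots.toFinset := by
    apply Finset.eq_of_subset_of_card_le hSsub
    calc P.roots.toFinset.card ≤ Multiset.card P.roots := Multiset.toFinset_card_le _
      _ ≤ P.natDegree := card_roots' P
      _ = q := hPdeg
      _ = S.card := hScard.symm
  have : (χ a : K) ∈ S := by rw [hSeq]; exact hroot _ hχpow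
  rw [hS, Finset.mem_image] at this
  obtain ⟨b, _, hb⟩ := this
  exact ⟨ω b, hb.symm⟩

theorem stmt_5 (p n : ℕ) [Fact p.Prime] (hodd : Odd p)
    {K : Type*} [Field K] [CharZero K] [Algebra ℤ_[p] K]
    (ζ : K) (hζ : IsPrimitiveRoot ζ (p ^ (n + 1)))
    (t : (ZMod p)ˣ →* (ZMod (p ^ (n + 1)))ˣ)
    (ht : ∀ a : (ZMod p)ˣ,
      Units.map (ZMod.castHom (dvd_pow_self p (Nat.succ_ne_zero n)) (ZMod p)).toMonoidHom
        (t a) = a)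
    (ω : (ZMod p)ˣ →* ℤ_[p]ˣ)
    (hω : ∀ a : (ZMod p)ˣ, PadicInt.toZMod ((ω a : ℤ_[p]ˣ) : ℤ_[p]) = (a : ZMod p))
    (χ : (ZMod p)ˣ →* Kˣ)
    (hχ : χ ≠ ((Units.map (algebraMap ℤ_[p] K).toMonoidHom).comp ω)⁻¹) :
    ((p : K) - 1)⁻¹ *
        ∑ a : (ZMod p)ˣ,
          ((χ a : K))⁻¹ *
            (ζ ^ (((t a : (ZMod (p ^ (n + 1)))ˣ) : ZMod (p ^ (n + 1))).val) - 1)⁻¹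
      ∈ Algebra.adjoin ℤ_[p] ({ζ} : Set K) := by
  classical
  have hp : p.Prime := Fact.out
  have hN1 : 1 < p ^ (n + 1) := by
    calc 1 < p := hp.one_lt
      _ ≤ p ^ (n+1) := Nat.le_self_pow (Nat.succ_ne_zero n) p
  have hNpos : 0 < p ^ (n + 1) := by omega
  haveI : NeZero (p ^ (n + 1)) := ⟨by omega⟩
  set A := algebraMap ℤ_[p] K with hA
  set R := Algebra.adjoin ℤ_[p] ({ζ} : Set K) with hR
  have hζR : ζ ∈ R := Algebra.self_mem_adjoin_singleton ℤ_[p] ζ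
  have hpowR : ∀ k : ℕ, ζ ^ k ∈ R := fun k => pow_mem hζR k
  have hAR : ∀ z : ℤ_[p], A z ∈ R := fun z => Subalgebra.algebraMap_mem R z
  have hζ1 : ζ ≠ 1 := hζ.ne_one hN1
  have hπ : ζ - 1 ≠ 0 := sub_ne_zero.mpr hζ1
  have hgeom : ∀ k : ℕ, ζ ^ k - 1 = (ζ - 1) * ∑ i ∈ range k, ζ ^ i := by
    intro k; rw [mul_comm, geom_sum_mul]
  have hsumR : ∀ k : ℕ, (∑ i ∈ range k, ζ ^ i) ∈ R := fun k => sum_mem fun i _ => hpowR i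
  -- p is divisible by ζ - 1 in R
  have hp_mem : ∃ c ∈ R, (p : K) = (ζ - 1) * c := by
    have hξ : IsPrimitiveRoot (ζ ^ p ^ n) p :=
      hζ.pow hNpos (by rw [pow_succ])
    have h0 : ∑ i ∈ range p, (ζ ^ p ^ n) ^ i = 0 := hξ.geom_sum_eq_zero hp.one_lt
    have hps : (p : K) = ∑ i ∈ range p, (1 - (ζ ^ p ^ n) ^ i) := by
      rw [Finset.sum_sub_distrib, h0, sub_zero, Finset.sum_const, Finset.card_range,
        nsmul_eq_mul, mul_one]
    refine ⟨∑ i ∈ range p, -(∑ j ∈ range (p ^ n * i), ζ ^ j), 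
      sum_mem fun i _ => neg_mem (hsumR _), ?_⟩
    rw [hps, Finset.mul_sum]
    refine Finset.sum_congr rfl fun i _ => ?_
    rw [← pow_mul, mul_neg, ← neg_sub, ← hgeom (p ^ n * i)]
  haveI : Fact (1 < p ^ (n + 1)) := ⟨hN1⟩
  set M : (ZMod p)ˣ → ℕ := fun a => ((t a : (ZMod (p ^ (n + 1)))ˣ) : ZMod (p ^ (n + 1))).val with hM
  have hMlt : ∀ a, M a < p ^ (n + 1) := fun a => ZMod.val_lt _
  have hMne0 : ∀ a, M a ≠ 0 := by
    intro a h
    have h2 : ((t a : (ZMod (p ^ (n + 1)))ˣ) : ZMod (p ^ (n + 1))) = 0 := by rwa [← ZMod.val_eq_zero]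
    exact (t a).ne_zero h2
  have hζMne : ∀ a, ζ ^ M a ≠ 1 := by
    intro a h
    exact hMne0 a (Nat.eq_zero_of_dvd_of_lt ((hζ.pow_eq_one_iff_dvd (M a)).mp h) (hMlt a))
  have hπM : ∀ a, ζ ^ M a - 1 ≠ 0 := fun a => sub_ne_zero.mpr (hζMne a)
  have hpowmod : ∀ k : ℕ, ζ ^ k = ζ ^ (k % p ^ (n + 1)) := by
    intro k
    conv_lhs => rw [← Nat.div_add_mod k (p ^ (n + 1))]
    rw [pow_add, pow_mul, hζ.pow_eq_one, one_pow, one_mul]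
  have hMM : ∀ a : (ZMod p)ˣ, (ζ ^ M a) ^ M a⁻¹ = ζ := by
    intro a
    rw [← pow_mul, hpowmod]
    have h2 : (M a * M a⁻¹) % p ^ (n + 1) = 1 := by
      have h1 : ((t a : (ZMod (p ^ (n + 1)))ˣ) : ZMod (p ^ (n + 1))) * ((t a⁻¹ : (ZMod (p ^ (n + 1)))ˣ) : ZMod (p ^ (n + 1))) = 1 := by
        rw [← Units.val_mul, ← map_mul]
        simp
      calc (M a * M a⁻¹) % p ^ (n + 1)
          = (((t a : (ZMod (p ^ (n + 1)))ˣ) : ZMod (p ^ (n + 1))) * ((t a⁻¹ : (ZMod (p ^ (n + 1)))ˣ) : ZMod (p ^ (n + 1)))).val := 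
            (ZMod.val_mul _ _).symm
        _ = 1 := by rw [h1, ZMod.val_one]
    rw [h2, pow_one]
  set w : (ZMod p)ˣ → K := fun a => ∑ i ∈ range (M a⁻¹), (ζ ^ M a) ^ i with hw
  have hwR : ∀ a, w a ∈ R := fun a => sum_mem fun i _ => pow_mem (hpowR _) _
  have hwinv : ∀ a, (ζ ^ M a - 1)⁻¹ = (ζ - 1)⁻¹ * w a := by
    intro a
    have h1 : ζ - 1 = (w a) * (ζ ^ M a - 1) := by
      rw [hw]; dsimp only; rw [geom_sum_mul, hMM a]
    have hwne : w a ≠ 0 := fun h => hπ (by rw [h1, h, zero_mul])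
    rw [h1, mul_inv, mul_comm (w a)⁻¹, mul_assoc, inv_mul_cancel₀ hwne, mul_one]
  have hwcong : ∀ a : (ZMod p)ˣ, ∃ c ∈ R, w a - (M a⁻¹ : K) = (ζ - 1) * c := by
    intro a
    refine ⟨∑ i ∈ range (M a⁻¹), ∑ j ∈ range (M a * i), ζ ^ j,
      sum_mem fun i _ => hsumR _, ?_⟩
    rw [hw]; dsimp only
    rw [Finset.mul_sum]
    have hM' : ((M a⁻¹ : ℕ) : K) = ∑ i ∈ range (M a⁻¹), (1 : K) := by
      rw [Finset.sum_const, Finset.card_range, nsmul_eq_mul, mul_one]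
    rw [hM', ← Finset.sum_sub_distrib]
    refine Finset.sum_congr rfl fun i _ => ?_
    rw [← pow_mul, hgeom (M a * i)]
  have homega : ∀ a : (ZMod p)ˣ, ∃ c ∈ R,
      (M a : K) - A ((ω a : ℤ_[p]ˣ) : ℤ_[p]) = (ζ - 1) * c := by
    intro a
    have h1 : PadicInt.toZMod (((M a : ℕ) : ℤ_[p]) - ((ω a : ℤ_[p]ˣ) : ℤ_[p])) = 0 := by
      rw [map_sub, hω, map_natCast, sub_eq_zero]
      have h2 := congrArg (Units.val) (ht a)
      rw [Units.coe_map] at h2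
      rw [hM]; dsimp only
      simp only [RingHom.toMonoidHom_eq_coe, MonoidHom.coe_coe, ZMod.castHom_apply] at h2
      rw [ZMod.natCast_val, ← h2]
    have h3 : ((M a : ℕ) : ℤ_[p]) - ((ω a : ℤ_[p]ˣ) : ℤ_[p]) ∈ IsLocalRing.maximalIdeal ℤ_[p] := by
      rw [← PadicInt.ker_toZMod]
      exact h1
    rw [PadicInt.maximalIdeal_eq_span_p, Ideal.mem_span_singleton] at h3
    obtain ⟨z, hz⟩ := h3
    obtain ⟨c, hcR, hc⟩ := hp_mem
    refine ⟨c * A z, mul_mem hcR (hAR z), ?_⟩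
    have h4 := congrArg A hz
    rw [map_sub, map_mul, map_natCast, map_natCast] at h4
    rw [h4, hc]; ring
  have hχinv : ∀ a : (ZMod p)ˣ, ∃ v : ℤ_[p], (χ a : K)⁻¹ = A v := by
    intro a
    obtain ⟨u, hu⟩ := chi_values' p ω hω χ a
    refine ⟨((u⁻¹ : ℤ_[p]ˣ) : ℤ_[p]), ?_⟩
    rw [hu]
    refine inv_eq_of_mul_eq_one_right ?_
    rw [← map_mul, Units.mul_inv, map_one]
  have hg : ∀ a : (ZMod p)ˣ, A ((ω a⁻¹ : ℤ_[p]ˣ) : ℤ_[p]) = (A ((ω a : ℤ_[p]ˣ) : ℤ_[p]))⁻¹ := by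
    intro a
    refine (inv_eq_of_mul_eq_one_right ?_).symm
    rw [← map_mul, map_inv, Units.mul_inv, map_one]
  have horth : ∑ a : (ZMod p)ˣ, (χ a : K)⁻¹ * (A ((ω a : ℤ_[p]ˣ) : ℤ_[p]))⁻¹ = 0 := by
    set ψ : (ZMod p)ˣ →* Kˣ := (χ * ((Units.map A.toMonoidHom).comp ω))⁻¹ with hψ
    have hne : (Units.coeHom K).comp ψ ≠ 1 := by
      intro h
      apply hχ
      ext a
      have h5 := DFunLike.congr_fun h a
      have h5' : ψ a = 1 := Units.ext (by simpa using h5)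
      rw [hψ] at h5'
      have h5'' : χ a * ((Units.map A.toMonoidHom).comp ω) a = 1 := by
        rw [MonoidHom.inv_apply, MonoidHom.mul_apply, inv_eq_one] at h5'
        exact h5'
      rw [MonoidHom.inv_apply]
      exact congrArg Units.val (eq_inv_of_mul_eq_one_left h5'')
    have h0 := sum_hom_units_eq_zero ((Units.coeHom K).comp ψ) hne
    refine Eq.trans (Finset.sum_congr rfl fun a _ => ?_) h0
    rw [hψ]
    simp only [MonoidHom.inv_apply, MonoidHom.mul_apply, MonoidHom.coe_comp, Function.comp_apply,
      Units.coeHom_apply, Units.val_inv_eq_inv_val, Units.val_mul, mul_inv, Units.coe_map,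
      RingHom.toMonoidHom_eq_coe, MonoidHom.coe_coe]
  choose c1 hc1R hc1 using hwcong
  choose c2 hc2R hc2 using homega
  choose v hv using hχinv
  have hsplit : ∃ Cc ∈ R, ∑ a : (ZMod p)ˣ, (χ a : K)⁻¹ * w a = (ζ - 1) * Cc := by
    refine ⟨∑ a : (ZMod p)ˣ, A (v a) * (c1 a + c2 a⁻¹),
      sum_mem fun a _ => mul_mem (hAR _) (add_mem (hc1R a) (hc2R a⁻¹)), ?_⟩
    have hterm : ∀ a : (ZMod p)ˣ, (χ a : K)⁻¹ * w a
        = (ζ - 1) * (A (v a) * (c1 a + c2 a⁻¹))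
          + (χ a : K)⁻¹ * (A ((ω a : ℤ_[p]ˣ) : ℤ_[p]))⁻¹ := by
      intro a
      have hd : w a - (A ((ω a : ℤ_[p]ˣ) : ℤ_[p]))⁻¹ = (ζ - 1) * (c1 a + c2 a⁻¹) := by
        rw [← hg a]
        calc w a - A ((ω a⁻¹ : ℤ_[p]ˣ) : ℤ_[p])
            = (w a - (M a⁻¹ : K)) + ((M a⁻¹ : K) - A ((ω a⁻¹ : ℤ_[p]ˣ) : ℤ_[p])) := by ring
          _ = (ζ - 1) * c1 a + (ζ - 1) * c2 a⁻¹ := by rw [hc1 a, hc2 a⁻¹]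
          _ = (ζ - 1) * (c1 a + c2 a⁻¹) := by ring
      calc (χ a : K)⁻¹ * w a
          = (χ a : K)⁻¹ * ((w a - (A ((ω a : ℤ_[p]ˣ) : ℤ_[p]))⁻¹)
              + (A ((ω a : ℤ_[p]ˣ) : ℤ_[p]))⁻¹) := by ring
        _ = (χ a : K)⁻¹ * ((ζ - 1) * (c1 a + c2 a⁻¹))
              + (χ a : K)⁻¹ * (A ((ω a : ℤ_[p]ˣ) : ℤ_[p]))⁻¹ := by rw [hd]; ring
        _ = (ζ - 1) * (A (v a) * (c1 a + c2 a⁻¹))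
              + (χ a : K)⁻¹ * (A ((ω a : ℤ_[p]ˣ) : ℤ_[p]))⁻¹ := by rw [hv a]; ring
    calc ∑ a : (ZMod p)ˣ, (χ a : K)⁻¹ * w a
        = ∑ a : (ZMod p)ˣ, ((ζ - 1) * (A (v a) * (c1 a + c2 a⁻¹))
            + (χ a : K)⁻¹ * (A ((ω a : ℤ_[p]ˣ) : ℤ_[p]))⁻¹) :=
          Finset.sum_congr rfl fun a _ => hterm a
      _ = (ζ - 1) * ∑ a : (ZMod p)ˣ, A (v a) * (c1 a + c2 a⁻¹)
            + ∑ a : (ZMod p)ˣ, (χ a : K)⁻¹ * (A ((ω a : ℤ_[p]ˣ) : ℤ_[p]))⁻¹ := by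
          rw [Finset.sum_add_distrib, Finset.mul_sum]
      _ = (ζ - 1) * ∑ a : (ZMod p)ˣ, A (v a) * (c1 a + c2 a⁻¹) := by rw [horth, add_zero]
  obtain ⟨Cc, hCcR, hCc⟩ := hsplit
  have hpu : IsUnit ((p : ℤ_[p]) - 1) := by
    by_contra h
    have hmem : (p : ℤ_[p]) - 1 ∈ IsLocalRing.maximalIdeal ℤ_[p] := by
      rw [IsLocalRing.mem_maximalIdeal]; exact h
    rw [← PadicInt.ker_toZMod, RingHom.mem_ker, map_sub, map_natCast, map_one,
      ZMod.natCast_self, zero_sub, neg_eq_zero] at hmem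
    exact one_ne_zero hmem
  obtain ⟨u, hu⟩ := hpu
  have hAu : A ((u : ℤ_[p]ˣ) : ℤ_[p]) = (p : K) - 1 := by rw [hu, map_sub, map_natCast, map_one]
  have hinvp : ((p : K) - 1)⁻¹ = A ((u⁻¹ : ℤ_[p]ˣ) : ℤ_[p]) := by
    rw [← hAu]
    refine inv_eq_of_mul_eq_one_right ?_
    rw [← map_mul, Units.mul_inv, map_one]
  show ((p : K) - 1)⁻¹ * ∑ a : (ZMod p)ˣ, (χ a : K)⁻¹ * (ζ ^ M a - 1)⁻¹ ∈ R
  have hsum2 : ∑ a : (ZMod p)ˣ, (χ a : K)⁻¹ * (ζ ^ M a - 1)⁻¹ = Cc := by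
    calc ∑ a : (ZMod p)ˣ, (χ a : K)⁻¹ * (ζ ^ M a - 1)⁻¹
        = ∑ a : (ZMod p)ˣ, (ζ - 1)⁻¹ * ((χ a : K)⁻¹ * w a) :=
          Finset.sum_congr rfl fun a _ => by rw [hwinv a]; ring
      _ = (ζ - 1)⁻¹ * ((ζ - 1) * Cc) := by rw [← Finset.mul_sum, hCc]
      _ = Cc := by rw [← mul_assoc, inv_mul_cancel₀ hπ, one_mul]
  rw [hsum2, hinvp]
  exact mul_mem (hAR _) hCcR
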